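/- The sparsemax loss is nonnegative, and the following are equivalent: (i) L(z; k) = 0; (ii) sparsemax(z) = δ_k (the delta distribution on k); (iii) z_k ≥ 1 + max_{j ≠ k} z_j. -/

import Mathlib

theorem stmt18 {K : ℕ} (τ : (Fin K → ℝ) → ℝ)
    (hτ : ∀ w : Fin K → ℝ, (∑ j, max 0 (w j - τ w)) = 1) (k : Fin K)
    (z : Fin K → ℝ) (L : ℝ)
    (hL : L = -z k + (1 / 2) * ∑ j ∈ Finset.univ.filter (fun j => τ z < z j),
        (z j ^ 2 - τ z ^ 2) + 1 / 2) :
    0 ≤ L ∧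
    (L = 0 ↔ (fun i => max 0 (z i - τ z)) = (fun i => if i = k then (1 : ℝ) else 0)) ∧
    (L = 0 ↔ ∀ j, j ≠ k → 1 + z j ≤ z k) := by
  set t := τ z with ht
  set p : Fin K → ℝ := fun i => max 0 (z i - t) with hp
  have hpnn : ∀ i, 0 ≤ p i := fun i => le_max_left _ _
  have hple : ∀ i, z i - t ≤ p i := fun i => le_max_right _ _
  have hsum : ∑ j, p j = 1 := hτ z
  have hfs : ∑ j ∈ Finset.univ.filter (fun j => t < z j), (z j ^ 2 - t ^ 2)
      = ∑ j, (p j ^ 2 + 2 * t * p j) := by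
    rw [Finset.sum_filter]
    apply Finset.sum_congr rfl
    intro j _
    by_cases h : t < z j
    · simp only [if_pos h, hp]
      rw [max_eq_right (by linarith : (0:ℝ) ≤ z j - t)]
      ring
    · simp only [if_neg h, hp]
      rw [max_eq_left (by linarith [not_lt.mp h] : z j - t ≤ (0:ℝ))]
      ring
  have hsum2 : ∑ j, (p j ^ 2 + 2 * t * p j) = (∑ j, p j ^ 2) + 2 * t := by
    rw [Finset.sum_add_distrib, ← Finset.mul_sum, hsum]; ring
  have hsplit : ∑ j, p j ^ 2 = p k ^ 2 + ∑ j ∈ Finset.univ.erase k, p j ^ 2 :=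
    (Finset.add_sum_erase _ _ (Finset.mem_univ k)).symm
  have hLform : L = (p k + t - z k) + (1/2) * (p k - 1)^2
      + (1/2) * ∑ j ∈ Finset.univ.erase k, p j ^ 2 := by
    rw [hL, hfs, hsum2, hsplit]; ring
  have hA : 0 ≤ p k + t - z k := by linarith [hple k]
  have hB : 0 ≤ ∑ j ∈ Finset.univ.erase k, p j ^ 2 :=
    Finset.sum_nonneg fun j _ => sq_nonneg _
  have hC : 0 ≤ (p k - 1)^2 := sq_nonneg _
  have hnn : 0 ≤ L := by rw [hLform]; linarith
  -- p k = 1  ↔  z k - t = 1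
  have hpk1 : p k = 1 → z k - t = 1 := by
    intro h
    rcases le_or_gt (z k - t) 0 with h'|h'
    · rw [hp] at h; simp only at h; rw [max_eq_left h'] at h; linarith
    · rw [hp] at h; simp only at h; rw [max_eq_right h'.le] at h; exact h
  have hpj0 : ∀ j, p j = 0 → z j ≤ t := by
    intro j h
    have := hple j
    rw [h] at this; linarith
  -- L = 0 ↔ p = δ_k
  have h2 : L = 0 ↔ p = (fun i => if i = k then (1:ℝ) else 0) := by
    constructor
    · intro h0
      rw [hLform] at h0
      have hC0 : (p k - 1)^2 = 0 := by linarith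
      have hB0 : ∑ j ∈ Finset.univ.erase k, p j ^ 2 = 0 := by linarith
      have hpk : p k = 1 := by
        have h := pow_eq_zero_iff (n := 2) (by norm_num) |>.mp hC0
        linarith
      have hz : ∀ j ∈ Finset.univ.erase k, p j ^ 2 = 0 :=
        (Finset.sum_eq_zero_iff_of_nonneg (fun j _ => sq_nonneg _)).mp hB0
      funext i
      by_cases hik : i = k
      · simp [hik, hpk]
      · have : p i ^ 2 = 0 := hz i (Finset.mem_erase.mpr ⟨hik, Finset.mem_univ i⟩)
        have : p i = 0 := pow_eq_zero_iff (n := 2) (by norm_num) |>.mp this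
        simp [hik, this]
    · intro heq
      have hpk : p k = 1 := by rw [heq]; simp
      have hzj : ∀ j, j ≠ k → p j = 0 := by
        intro j hj; rw [heq]; simp [hj]
      have hzk : z k - t = 1 := hpk1 hpk
      have hB0 : ∑ j ∈ Finset.univ.erase k, p j ^ 2 = 0 :=
        Finset.sum_eq_zero fun j hj => by
          rw [hzj j (Finset.mem_erase.mp hj).1]; ring
      rw [hLform, hpk, hB0]
      linarith
  -- p = δ_k ↔ margin condition
  have h3 : p = (fun i => if i = k then (1:ℝ) else 0) ↔ ∀ j, j ≠ k → 1 + z j ≤ z k := by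
    constructor
    · intro heq j hj
      have hpk : p k = 1 := by rw [heq]; simp
      have hzk : z k - t = 1 := hpk1 hpk
      have hzj : p j = 0 := by rw [heq]; simp [hj]
      have := hpj0 j hzj
      linarith
    · intro hge
      have hex : ∃ j, p j ≠ 0 := by
        by_contra h
        push_neg at h
        have : (∑ j, p j) = 0 := Finset.sum_eq_zero fun j _ => h j
        rw [hsum] at this; norm_num at this
      obtain ⟨j, hj⟩ := hex
      have hjpos : 0 < p j := lt_of_le_of_ne (hpnn j) (Ne.symm hj)
      have hjz : t < z j := by
        by_contra h
        push_neg at h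
        have : p j = 0 := by rw [hp]; simp only; rw [max_eq_left (by linarith)]
        linarith
      have htk : t < z k := by
        by_cases hjk : j = k
        · rwa [hjk] at hjz
        · have := hge j hjk; linarith
      have hpkval : p k = z k - t := by
        rw [hp]; simp only; rw [max_eq_right (by linarith)]
      have hzero : ∀ i, i ≠ k → p i = 0 := by
        intro i hik
        by_contra hne
        have hipos : 0 < p i := lt_of_le_of_ne (hpnn i) (Ne.symm hne)
        have hiz : t < z i := by
          by_contra h
          push_neg at h
          have : p i = 0 := by rw [hp]; simp only; rw [max_eq_left (by linarith)]
          linarith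
        have hpival : p i = z i - t := by
          rw [hp]; simp only; rw [max_eq_right (by linarith)]
        have hge' := hge i hik
        -- p k ≥ 1 + p i
        have h1 : 1 + p i ≤ p k := by rw [hpival, hpkval]; linarith
        have hrest : p i ≤ ∑ m ∈ Finset.univ.erase k, p m :=
          Finset.single_le_sum (fun m _ => hpnn m)
            (Finset.mem_erase.mpr ⟨hik, Finset.mem_univ i⟩)
        have hsum' : p k + ∑ m ∈ Finset.univ.erase k, p m = 1 :=
          Finset.add_sum_erase _ _ (Finset.mem_univ k) |>.trans hsum
        linarith
      have hpk : p k = 1 := by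
        have hB0 : ∑ m ∈ Finset.univ.erase k, p m = 0 :=
          Finset.sum_eq_zero fun m hm => hzero m (Finset.mem_erase.mp hm).1
        have hsum' : p k + ∑ m ∈ Finset.univ.erase k, p m = 1 :=
          Finset.add_sum_erase _ _ (Finset.mem_univ k) |>.trans hsum
        linarith
      funext i
      by_cases hik : i = k
      · simp [hik, hpk]
      · simp [hik, hzero i hik]
  exact ⟨hnn, h2, h2.trans h3⟩
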